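/- Let μ ⊆ λ be partitions fitting in the k×(n−k) rectangle and set w_{λ/μ} := w_μ ∘ w_λ^{-1} ∈ S_n. Then w_μ = w_{λ/μ} ∘ w_λ is a length-additive factorization, i.e. ℓ(w_μ) = ℓ(w_{λ/μ}) + ℓ(w_λ). -/

import Mathlib

/-- The height `λ̄_a` of the `a`-th column (counted from the right) of the
partition `f = (f 1 ≥ ⋯ ≥ f k)` inside the `k × (n-k)` rectangle. -/
def colHeight (n k : ℕ) (f : ℕ → ℕ) (a : ℕ) : ℕ :=
  ((Finset.Icc 1 k).filter (fun i => n - k - a + 1 ≤ f i)).card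

/-- The number of inversions of `σ` on `{1, …, n}`. -/
def invCount (n : ℕ) (σ : Equiv.Perm ℕ) : ℕ :=
  (((Finset.Icc 1 n) ×ˢ (Finset.Icc 1 n)).filter
    (fun p => p.1 < p.2 ∧ σ p.2 < σ p.1)).card

theorem stmt1 (n k : ℕ) (hk : 0 < k) (hkn : k < n) (l m : ℕ → ℕ)
    (hlmono : ∀ i j, 1 ≤ i → i ≤ j → j ≤ k → l j ≤ l i)
    (hl1 : l 1 ≤ n - k)
    (hmmono : ∀ i j, 1 ≤ i → i ≤ j → j ≤ k → m j ≤ m i)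
    (hml : ∀ i, 1 ≤ i → i ≤ k → m i ≤ l i)
    (wl wm : Equiv.Perm ℕ)
    (hwl1 : ∀ i, 1 ≤ i → i ≤ k → wl i = n - k - l i + i)
    (hwl2 : ∀ a, 1 ≤ a → a ≤ n - k → wl (k + a) = a + colHeight n k l a)
    (hwm1 : ∀ i, 1 ≤ i → i ≤ k → wm i = n - k - m i + i)
    (hwm2 : ∀ a, 1 ≤ a → a ≤ n - k → wm (k + a) = a + colHeight n k m a) :
    invCount n wm = invCount n (wm * wl⁻¹) + invCount n wl := by
  classical
  set T := (Finset.Icc 1 n) ×ˢ (Finset.Icc 1 n) with hT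
  have hlk : ∀ i, 1 ≤ i → i ≤ k → l i ≤ n - k :=
    fun i h1 h2 => (hlmono 1 i le_rfl h1 h2).trans hl1
  have hcol_le_k : ∀ (f : ℕ → ℕ) (a : ℕ), colHeight n k f a ≤ k := by
    intro f a
    calc ((Finset.Icc 1 k).filter (fun i => n - k - a + 1 ≤ f i)).card
        ≤ (Finset.Icc 1 k).card := Finset.card_filter_le _ _
      _ = k := by simp
  have hcol_mono_a : ∀ (f : ℕ → ℕ) (a b : ℕ), a ≤ b →
      colHeight n k f a ≤ colHeight n k f b := by
    intro f a b hab
    apply Finset.card_le_card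
    intro i hi
    simp only [Finset.mem_filter] at hi ⊢
    exact ⟨hi.1, le_trans (by omega) hi.2⟩
  have hcol_mono_f : ∀ a : ℕ, colHeight n k m a ≤ colHeight n k l a := by
    intro a
    apply Finset.card_le_card
    intro i hi
    simp only [Finset.mem_filter, Finset.mem_Icc] at hi ⊢
    exact ⟨hi.1, hi.2.trans (hml i hi.1.1 hi.1.2)⟩
  -- wl and wm map Icc 1 n into itself
  have hwl_mem : ∀ x ∈ Finset.Icc 1 n, wl x ∈ Finset.Icc 1 n := by
    intro x hx
    simp only [Finset.mem_Icc] at hx ⊢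
    by_cases hxk : x ≤ k
    · rw [hwl1 x hx.1 hxk]
      have := hlk x hx.1 hxk
      omega
    · have hx' : x = k + (x - k) := by omega
      rw [hx', hwl2 (x - k) (by omega) (by omega)]
      have := hcol_le_k l (x - k)
      omega
  -- key lemma: every inversion of wl is an inversion of wm
  have key : ∀ i j, i ∈ Finset.Icc 1 n → j ∈ Finset.Icc 1 n → i < j →
      wl j < wl i → wm j < wm i := by
    intro i j hi hj hij hinv
    simp only [Finset.mem_Icc] at hi hj
    by_cases hjk : j ≤ k
    · exfalso
      have hik : i ≤ k := le_trans hij.le hjk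
      rw [hwl1 i hi.1 hik, hwl1 j hj.1 hjk] at hinv
      have h1 : l j ≤ l i := hlmono i j hi.1 hij.le hjk
      have h2 : l i ≤ n - k := hlk i hi.1 hik
      omega
    · by_cases hik : i ≤ k
      · -- i ≤ k < j
        have hj' : j = k + (j - k) := by omega
        have ha1 : 1 ≤ j - k := by omega
        have ha2 : j - k ≤ n - k := by omega
        have e1 : wl j = (j - k) + colHeight n k l (j - k) := by
          conv_lhs => rw [hj']
          exact hwl2 _ ha1 ha2
        have e2 : wm j = (j - k) + colHeight n k m (j - k) := by
          conv_lhs => rw [hj']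
          exact hwm2 _ ha1 ha2
        have h3 : wm j ≤ wl j := by
          rw [e1, e2]
          have := hcol_mono_f (j - k)
          omega
        have h4 : wl i ≤ wm i := by
          rw [hwl1 i hi.1 hik, hwm1 i hi.1 hik]
          have := hml i hi.1 hik
          have := hlk i hi.1 hik
          omega
        omega
      · exfalso
        have hi' : i = k + (i - k) := by omega
        have hj' : j = k + (j - k) := by omega
        have e1 : wl i = (i - k) + colHeight n k l (i - k) := by
          conv_lhs => rw [hi']
          exact hwl2 _ (by omega) (by omega)
        have e2 : wl j = (j - k) + colHeight n k l (j - k) := by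
          conv_lhs => rw [hj']
          exact hwl2 _ (by omega) (by omega)
        have := hcol_mono_a l (i - k) (j - k) (by omega)
        omega
  -- wl⁻¹ maps Icc 1 n into itself
  have himg : Finset.image wl (Finset.Icc 1 n) = Finset.Icc 1 n := by
    apply Finset.eq_of_subset_of_card_le
    · intro y hy
      obtain ⟨x, hx, rfl⟩ := Finset.mem_image.1 hy
      exact hwl_mem x hx
    · rw [Finset.card_image_of_injective _ wl.injective]
  have hwlinv_mem : ∀ x ∈ Finset.Icc 1 n, wl⁻¹ x ∈ Finset.Icc 1 n := by
    intro x hx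
    rw [← himg] at hx
    obtain ⟨i, hi, rfl⟩ := Finset.mem_image.1 hx
    rwa [Equiv.Perm.inv_def, Equiv.symm_apply_apply]
  -- Step 1: invCount wl counts pairs that are inversions of both wm and wl
  have e_l : invCount n wl =
      (T.filter (fun p => (p.1 < p.2 ∧ wm p.2 < wm p.1) ∧ wl p.2 < wl p.1)).card := by
    unfold invCount
    congr 1
    apply Finset.filter_congr
    intro p hp
    simp only [hT, Finset.mem_product] at hp
    constructor
    · rintro ⟨h1, h2⟩
      exact ⟨⟨h1, key p.1 p.2 hp.1 hp.2 h1 h2⟩, h2⟩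
    · rintro ⟨⟨h1, _⟩, h2⟩
      exact ⟨h1, h2⟩
  -- Step 2: split invCount wm
  have split : invCount n wm =
      (T.filter (fun p => (p.1 < p.2 ∧ wm p.2 < wm p.1) ∧ wl p.2 < wl p.1)).card +
      (T.filter (fun p => (p.1 < p.2 ∧ wm p.2 < wm p.1) ∧ ¬ (wl p.2 < wl p.1))).card := by
    have h := Finset.card_filter_add_card_filter_not
      (s := T.filter (fun p => p.1 < p.2 ∧ wm p.2 < wm p.1))
      (p := fun p : ℕ × ℕ => wl p.2 < wl p.1)
    rw [Finset.filter_filter, Finset.filter_filter] at h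
    unfold invCount
    exact h.symm
  -- Step 3: invCount (wm * wl⁻¹) counts inversions of wm that are not inversions of wl
  have e_mix :
      (T.filter (fun p => (p.1 < p.2 ∧ wm p.2 < wm p.1) ∧ ¬ (wl p.2 < wl p.1))).card =
      invCount n (wm * wl⁻¹) := by
    unfold invCount
    apply Finset.card_bij (fun p _ => (wl p.1, wl p.2))
    · intro p hp
      simp only [Finset.mem_filter, hT, Finset.mem_product] at hp ⊢
      obtain ⟨⟨hp1, hp2⟩, ⟨hlt, hwmlt⟩, hnot⟩ := hp
      have hne : wl p.1 ≠ wl p.2 := by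
        intro h
        have := wl.injective h
        omega
      refine ⟨⟨hwl_mem _ hp1, hwl_mem _ hp2⟩, by omega, ?_⟩
      simp only [Equiv.Perm.mul_apply, Equiv.Perm.inv_def, Equiv.symm_apply_apply]
      exact hwmlt
    · intro a ha b hb hab
      have h1 : wl a.1 = wl b.1 := congrArg Prod.fst hab
      have h2 : wl a.2 = wl b.2 := congrArg Prod.snd hab
      exact Prod.ext (wl.injective h1) (wl.injective h2)
    · intro q hq
      simp only [Finset.mem_filter, hT, Finset.mem_product] at hq
      obtain ⟨⟨hq1, hq2⟩, hlt, hinv⟩ := hq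
      set i := wl⁻¹ q.1 with hi
      set j := wl⁻¹ q.2 with hj
      have hi' : i ∈ Finset.Icc 1 n := hwlinv_mem _ hq1
      have hj' : j ∈ Finset.Icc 1 n := hwlinv_mem _ hq2
      have hwli : wl i = q.1 := Equiv.apply_symm_apply wl q.1
      have hwlj : wl j = q.2 := Equiv.apply_symm_apply wl q.2
      have hwm_ij : wm j < wm i := by
        simpa only [Equiv.Perm.mul_apply, hi, hj] using hinv
      have hij : i < j := by
        rcases lt_trichotomy i j with h | h | h
        · exact h
        · exfalso; rw [h, hwlj] at hwli; omega
        · exfalso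
          have := key j i hj' hi' h (by omega)
          omega
      refine ⟨(i, j), ?_, ?_⟩
      · simp only [Finset.mem_filter, hT, Finset.mem_product]
        exact ⟨⟨hi', hj'⟩, ⟨hij, hwm_ij⟩, by omega⟩
      · exact Prod.ext hwli hwlj
  rw [split, ← e_l, e_mix]
  omega
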